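/- For c ∈ K and p ∈ K*, q = p⁻¹, the cyclic partial derivatives of the potential Φ₃ = xyt + pytx - ptxy + yxt - xty - ptyx + (pc/3)t³ in the free algebra K⟨t,x,y⟩ are ∂_x(Φ₃) = yt - pty, ∂_y(Φ₃) = tx - pxt, and ∂_t(Φ₃) = xy - pyx + pct² = -p(yx - p⁻¹xy - ct²). Hence the Jacobian algebra J(Φ₃) is exactly the quantum generalized Heisenberg algebra H_{p⁻¹}(pt, ct²). -/

import Mathlib

/- STATEMENT 14: for c ∈ K, p ∈ K*, q = p⁻¹ (char K ≠ 2, 3), the cyclic partial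
derivatives of the potential
Φ₃ = xyt + p·ytx - p·txy + yxt - xty - p·tyx + (pc/3)·t³
in the free algebra K⟨t,x,y⟩ are ∂_x(Φ₃) = yt - p·ty, ∂_y(Φ₃) = tx - p·xt,
∂_t(Φ₃) = xy - p·yx + pc·t² = -p(yx - p⁻¹xy - c·t²), and the Jacobian algebra
J(Φ₃) is exactly the quantum generalized Heisenberg algebra H_{p⁻¹}(pt, ct²). -/

noncomputable section

open FreeAlgebra Polynomial

variable (K : Type) [Field K]

/-- The monomial in the free algebra given by a word (list of letters). -/
def word (l : List (Fin 3)) : FreeAlgebra K (Fin 3) := (l.map (ι K)).prod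

/-- The cyclic partial derivative of a word `l` with respect to the letter `i`:
the sum over all factorizations `l = u ++ [i] ++ v` of the monomial `v ++ u`. -/
def wordCycDeriv (i : Fin 3) (l : List (Fin 3)) : FreeAlgebra K (Fin 3) :=
  ((List.range l.length).map fun k =>
    if l[k]? = some i then word K (l.drop (k + 1) ++ l.take k) else 0).sum

/-- The cyclic partial derivative with respect to the letter `i`, extended linearly
to the whole free algebra. -/
def cycDeriv (i : Fin 3) (a : FreeAlgebra K (Fin 3)) : FreeAlgebra K (Fin 3) :=
  ((FreeAlgebra.equivMonoidAlgebraFreeMonoid (R := K) (X := Fin 3)) a).coeff.sum fun w c =>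
    c • wordCycDeriv K i (FreeMonoid.toList w)

/-- The relations of the Jacobian algebra `J(Φ)`: each cyclic partial derivative
of the potential `Φ` is set to zero. -/
inductive jacRel (Φ : FreeAlgebra K (Fin 3)) :
    FreeAlgebra K (Fin 3) → FreeAlgebra K (Fin 3) → Prop
  | mk (i : Fin 3) : jacRel Φ (cycDeriv K i Φ) 0

/-- The Jacobian algebra `J(Φ)` of a potential `Φ`. -/
abbrev Jac (Φ : FreeAlgebra K (Fin 3)) := RingQuot (jacRel K Φ)

/-- Relations of `H_q(f,g)`. t = ι 0, x = ι 1, y = ι 2. -/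
inductive qghRel (q : K) (f g : Polynomial K) :
    FreeAlgebra K (Fin 3) → FreeAlgebra K (Fin 3) → Prop
  | r1 : qghRel q f g (ι K (0 : Fin 3) * ι K (1 : Fin 3))
      (ι K (1 : Fin 3) * Polynomial.aeval (ι K (0 : Fin 3)) f)
  | r2 : qghRel q f g (ι K (2 : Fin 3) * ι K (0 : Fin 3))
      (Polynomial.aeval (ι K (0 : Fin 3)) f * ι K (2 : Fin 3))
  | r3 : qghRel q f g (ι K (2 : Fin 3) * ι K (1 : Fin 3) - q • (ι K (1 : Fin 3) * ι K (2 : Fin 3)))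
      (Polynomial.aeval (ι K (0 : Fin 3)) g)

/-- The quantum generalized Heisenberg algebra `H_q(f,g)`. -/
abbrev QGH (q : K) (f g : Polynomial K) := RingQuot (qghRel K q f g)

/-- The potential `Φ₃ = xyt + p·ytx - p·txy + yxt - xty - p·tyx + (pc/3)·t³`,
with t = ι 0, x = ι 1, y = ι 2. -/
def Phi3 (p c : K) : FreeAlgebra K (Fin 3) :=
  ι K (1 : Fin 3) * ι K (2 : Fin 3) * ι K (0 : Fin 3) +
    p • (ι K (2 : Fin 3) * ι K (0 : Fin 3) * ι K (1 : Fin 3)) -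
    p • (ι K (0 : Fin 3) * ι K (1 : Fin 3) * ι K (2 : Fin 3)) +
    ι K (2 : Fin 3) * ι K (1 : Fin 3) * ι K (0 : Fin 3) -
    ι K (1 : Fin 3) * ι K (0 : Fin 3) * ι K (2 : Fin 3) -
    p • (ι K (0 : Fin 3) * ι K (2 : Fin 3) * ι K (1 : Fin 3)) +
    (p * c / 3) • (ι K (0 : Fin 3) ^ 3)




section Aux

variable {K : Type} [Field K]

theorem cycDeriv_eq (i : Fin 3) (a : FreeAlgebra K (Fin 3)) :
    cycDeriv K i a = Finsupp.linearCombination K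
      (fun w : FreeMonoid (Fin 3) => wordCycDeriv K i (FreeMonoid.toList w))
      (equivMonoidAlgebraFreeMonoid a).coeff := by
  rw [cycDeriv, Finsupp.linearCombination_apply]

theorem cycDeriv_add (i : Fin 3) (a b : FreeAlgebra K (Fin 3)) :
    cycDeriv K i (a + b) = cycDeriv K i a + cycDeriv K i b := by
  simp [cycDeriv_eq, MonoidAlgebra.coeff_add]

theorem cycDeriv_sub (i : Fin 3) (a b : FreeAlgebra K (Fin 3)) :
    cycDeriv K i (a - b) = cycDeriv K i a - cycDeriv K i b := by
  simp [cycDeriv_eq, MonoidAlgebra.coeff_sub]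

theorem cycDeriv_smul (i : Fin 3) (r : K) (a : FreeAlgebra K (Fin 3)) :
    cycDeriv K i (r • a) = r • cycDeriv K i a := by
  simp [cycDeriv_eq]

theorem equiv_iota (x : Fin 3) :
    equivMonoidAlgebraFreeMonoid (ι K x) = MonoidAlgebra.single (FreeMonoid.of x) 1 := by
  simp [FreeAlgebra.equivMonoidAlgebraFreeMonoid, MonoidAlgebra.of_apply]

theorem cycDeriv_iotaMul (i a b c : Fin 3) :
    cycDeriv K i (ι K a * ι K b * ι K c) = wordCycDeriv K i [a, b, c] := by
  have he : equivMonoidAlgebraFreeMonoid (ι K a * ι K b * ι K c) =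
      MonoidAlgebra.single (FreeMonoid.ofList [a, b, c]) (1 : K) := by
    rw [map_mul, map_mul, equiv_iota, equiv_iota, equiv_iota,
      MonoidAlgebra.single_mul_single, MonoidAlgebra.single_mul_single, one_mul, one_mul]
    rfl
  rw [cycDeriv_eq, he, MonoidAlgebra.coeff_single, Finsupp.linearCombination_single, one_smul]
  rfl

theorem wcd_1_120 : wordCycDeriv K 1 [1, 2, 0] = ι K (2 : Fin 3) * ι K (0 : Fin 3) := by
  simp [wordCycDeriv, word, List.range_succ]

theorem wcd_1_201 : wordCycDeriv K 1 [2, 0, 1] = ι K (2 : Fin 3) * ι K (0 : Fin 3) := by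
  simp [wordCycDeriv, word, List.range_succ]

theorem wcd_1_012 : wordCycDeriv K 1 [0, 1, 2] = ι K (2 : Fin 3) * ι K (0 : Fin 3) := by
  simp [wordCycDeriv, word, List.range_succ]

theorem wcd_1_210 : wordCycDeriv K 1 [2, 1, 0] = ι K (0 : Fin 3) * ι K (2 : Fin 3) := by
  simp [wordCycDeriv, word, List.range_succ]

theorem wcd_1_102 : wordCycDeriv K 1 [1, 0, 2] = ι K (0 : Fin 3) * ι K (2 : Fin 3) := by
  simp [wordCycDeriv, word, List.range_succ]

theorem wcd_1_021 : wordCycDeriv K 1 [0, 2, 1] = ι K (0 : Fin 3) * ι K (2 : Fin 3) := by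
  simp [wordCycDeriv, word, List.range_succ]

theorem wcd_1_000 : wordCycDeriv K 1 [0, 0, 0] = 0 := by
  simp [wordCycDeriv, word, List.range_succ]

theorem wcd_2_120 : wordCycDeriv K 2 [1, 2, 0] = ι K (0 : Fin 3) * ι K (1 : Fin 3) := by
  simp [wordCycDeriv, word, List.range_succ]

theorem wcd_2_201 : wordCycDeriv K 2 [2, 0, 1] = ι K (0 : Fin 3) * ι K (1 : Fin 3) := by
  simp [wordCycDeriv, word, List.range_succ]

theorem wcd_2_012 : wordCycDeriv K 2 [0, 1, 2] = ι K (0 : Fin 3) * ι K (1 : Fin 3) := by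
  simp [wordCycDeriv, word, List.range_succ]

theorem wcd_2_210 : wordCycDeriv K 2 [2, 1, 0] = ι K (1 : Fin 3) * ι K (0 : Fin 3) := by
  simp [wordCycDeriv, word, List.range_succ]

theorem wcd_2_102 : wordCycDeriv K 2 [1, 0, 2] = ι K (1 : Fin 3) * ι K (0 : Fin 3) := by
  simp [wordCycDeriv, word, List.range_succ]

theorem wcd_2_021 : wordCycDeriv K 2 [0, 2, 1] = ι K (1 : Fin 3) * ι K (0 : Fin 3) := by
  simp [wordCycDeriv, word, List.range_succ]

theorem wcd_2_000 : wordCycDeriv K 2 [0, 0, 0] = 0 := by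
  simp [wordCycDeriv, word, List.range_succ]

theorem wcd_0_120 : wordCycDeriv K 0 [1, 2, 0] = ι K (1 : Fin 3) * ι K (2 : Fin 3) := by
  simp [wordCycDeriv, word, List.range_succ]

theorem wcd_0_201 : wordCycDeriv K 0 [2, 0, 1] = ι K (1 : Fin 3) * ι K (2 : Fin 3) := by
  simp [wordCycDeriv, word, List.range_succ]

theorem wcd_0_012 : wordCycDeriv K 0 [0, 1, 2] = ι K (1 : Fin 3) * ι K (2 : Fin 3) := by
  simp [wordCycDeriv, word, List.range_succ]

theorem wcd_0_210 : wordCycDeriv K 0 [2, 1, 0] = ι K (2 : Fin 3) * ι K (1 : Fin 3) := by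
  simp [wordCycDeriv, word, List.range_succ]

theorem wcd_0_102 : wordCycDeriv K 0 [1, 0, 2] = ι K (2 : Fin 3) * ι K (1 : Fin 3) := by
  simp [wordCycDeriv, word, List.range_succ]

theorem wcd_0_021 : wordCycDeriv K 0 [0, 2, 1] = ι K (2 : Fin 3) * ι K (1 : Fin 3) := by
  simp [wordCycDeriv, word, List.range_succ]

theorem wcd_0_000 : wordCycDeriv K 0 [0, 0, 0] = (3 : K) • (ι K (0 : Fin 3) * ι K (0 : Fin 3)) := by
  simp [wordCycDeriv, word, List.range_succ]
  module


theorem cd1 (p c : K) :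
    cycDeriv K 1 (Phi3 K p c) =
      ι K (2 : Fin 3) * ι K (0 : Fin 3) - p • (ι K (0 : Fin 3) * ι K (2 : Fin 3)) := by
  rw [Phi3, show (ι K (0 : Fin 3)) ^ 3 = ι K 0 * ι K 0 * ι K 0 by rw [pow_succ, pow_two]]
  simp only [cycDeriv_add, cycDeriv_sub, cycDeriv_smul, cycDeriv_iotaMul, wcd_1_120, wcd_1_201, wcd_1_012, wcd_1_210, wcd_1_102, wcd_1_021, wcd_2_120, wcd_2_201, wcd_2_012, wcd_2_210, wcd_2_102, wcd_2_021, wcd_0_120, wcd_0_201, wcd_0_012, wcd_0_210, wcd_0_102, wcd_0_021, wcd_1_000, wcd_2_000, wcd_0_000]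
  module

theorem cd2 (p c : K) :
    cycDeriv K 2 (Phi3 K p c) =
      ι K (0 : Fin 3) * ι K (1 : Fin 3) - p • (ι K (1 : Fin 3) * ι K (0 : Fin 3)) := by
  rw [Phi3, show (ι K (0 : Fin 3)) ^ 3 = ι K 0 * ι K 0 * ι K 0 by rw [pow_succ, pow_two]]
  simp only [cycDeriv_add, cycDeriv_sub, cycDeriv_smul, cycDeriv_iotaMul, wcd_1_120, wcd_1_201, wcd_1_012, wcd_1_210, wcd_1_102, wcd_1_021, wcd_2_120, wcd_2_201, wcd_2_012, wcd_2_210, wcd_2_102, wcd_2_021, wcd_0_120, wcd_0_201, wcd_0_012, wcd_0_210, wcd_0_102, wcd_0_021, wcd_1_000, wcd_2_000, wcd_0_000]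
  module

theorem cd0 (p c : K) (h3 : (3 : K) ≠ 0) :
    cycDeriv K 0 (Phi3 K p c) =
      ι K (1 : Fin 3) * ι K (2 : Fin 3) - p • (ι K (2 : Fin 3) * ι K (1 : Fin 3)) +
        (p * c) • (ι K (0 : Fin 3) ^ 2) := by
  rw [Phi3, show (ι K (0 : Fin 3)) ^ 3 = ι K 0 * ι K 0 * ι K 0 by rw [pow_succ, pow_two],
    show (ι K (0 : Fin 3)) ^ 2 = ι K 0 * ι K 0 by rw [pow_two]]
  simp only [cycDeriv_add, cycDeriv_sub, cycDeriv_smul, cycDeriv_iotaMul, wcd_1_120, wcd_1_201, wcd_1_012, wcd_1_210, wcd_1_102, wcd_1_021, wcd_2_120, wcd_2_201, wcd_2_012, wcd_2_210, wcd_2_102, wcd_2_021, wcd_0_120, wcd_0_201, wcd_0_012, wcd_0_210, wcd_0_102, wcd_0_021, wcd_1_000, wcd_2_000, wcd_0_000]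
  match_scalars <;> field_simp <;> ring

end Aux

theorem stmt14 (p c : K) (hp : p ≠ 0) (h2 : (2 : K) ≠ 0) (h3 : (3 : K) ≠ 0) :
    cycDeriv K 1 (Phi3 K p c) =
      ι K (2 : Fin 3) * ι K (0 : Fin 3) - p • (ι K (0 : Fin 3) * ι K (2 : Fin 3)) ∧
    cycDeriv K 2 (Phi3 K p c) =
      ι K (0 : Fin 3) * ι K (1 : Fin 3) - p • (ι K (1 : Fin 3) * ι K (0 : Fin 3)) ∧
    cycDeriv K 0 (Phi3 K p c) =
      ι K (1 : Fin 3) * ι K (2 : Fin 3) - p • (ι K (2 : Fin 3) * ι K (1 : Fin 3)) +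
        (p * c) • (ι K (0 : Fin 3) ^ 2) ∧
    cycDeriv K 0 (Phi3 K p c) =
      (-p) • (ι K (2 : Fin 3) * ι K (1 : Fin 3) - p⁻¹ • (ι K (1 : Fin 3) * ι K (2 : Fin 3)) -
        c • (ι K (0 : Fin 3) ^ 2)) ∧
    Nonempty (Jac K (Phi3 K p c) ≃ₐ[K] QGH K p⁻¹ (C p * X) (C c * X ^ 2)) := by
  have hcd1 := cd1 (K := K) p c
  have hcd2 := cd2 (K := K) p c
  have hcd0 := cd0 (K := K) p c h3
  have hcd0' : cycDeriv K 0 (Phi3 K p c) =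
      (-p) • (ι K (2 : Fin 3) * ι K (1 : Fin 3) - p⁻¹ • (ι K (1 : Fin 3) * ι K (2 : Fin 3)) -
        c • (ι K (0 : Fin 3) ^ 2)) := by
    rw [hcd0]; match_scalars <;> field_simp <;> ring
  refine ⟨hcd1, hcd2, hcd0, hcd0', ⟨?_⟩⟩
  set mkJ := RingQuot.mkAlgHom K (jacRel K (Phi3 K p c)) with hmkJ
  set mkQ := RingQuot.mkAlgHom K (qghRel K p⁻¹ (C p * X) (C c * X ^ 2)) with hmkQ
  have haf : (Polynomial.aeval (ι K (0 : Fin 3))) (C p * X) = p • ι K (0 : Fin 3) := by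
    simp [Algebra.smul_def]
  have hag : (Polynomial.aeval (ι K (0 : Fin 3))) (C c * X ^ 2) = c • (ι K (0 : Fin 3) ^ 2) := by
    simp [Algebra.smul_def]
  have hF : ∀ ⦃a b⦄, jacRel K (Phi3 K p c) a b → mkQ a = mkQ b := by
    rintro a b ⟨i⟩
    rw [map_zero]
    fin_cases i
    · show mkQ (cycDeriv K 0 (Phi3 K p c)) = 0
      rw [hcd0', map_smul, map_sub, map_sub, map_smul, map_smul]
      have h3' := RingQuot.mkAlgHom_rel K
        (qghRel.r3 (K := K) (q := p⁻¹) (f := C p * X) (g := C c * X ^ 2))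
      rw [hag, map_smul, map_sub, map_smul] at h3'
      rw [h3']
      simp [hmkQ]
    · show mkQ (cycDeriv K 1 (Phi3 K p c)) = 0
      rw [hcd1, map_sub, map_smul]
      have h1' := RingQuot.mkAlgHom_rel K
        (qghRel.r2 (K := K) (q := p⁻¹) (f := C p * X) (g := C c * X ^ 2))
      rw [haf, smul_mul_assoc, map_smul] at h1'
      rw [h1', sub_self]
    · show mkQ (cycDeriv K 2 (Phi3 K p c)) = 0
      rw [hcd2, map_sub, map_smul]
      have h2' := RingQuot.mkAlgHom_rel K
        (qghRel.r1 (K := K) (q := p⁻¹) (f := C p * X) (g := C c * X ^ 2))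
      rw [haf, mul_smul_comm, map_smul] at h2'
      rw [h2', sub_self]
  have hG : ∀ ⦃a b⦄, qghRel K p⁻¹ (C p * X) (C c * X ^ 2) a b → mkJ a = mkJ b := by
    rintro a b (_ | _ | _)
    · rw [haf, mul_smul_comm, map_smul]
      have := RingQuot.mkAlgHom_rel K (jacRel.mk (K := K) (Φ := Phi3 K p c) 2)
      rw [hcd2, map_zero, map_sub, map_smul, sub_eq_zero] at this
      exact this
    · rw [haf, smul_mul_assoc, map_smul]
      have := RingQuot.mkAlgHom_rel K (jacRel.mk (K := K) (Φ := Phi3 K p c) 1)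
      rw [hcd1, map_zero, map_sub, map_smul, sub_eq_zero] at this
      exact this
    · have := RingQuot.mkAlgHom_rel K (jacRel.mk (K := K) (Φ := Phi3 K p c) 0)
      rw [hcd0', map_zero, map_smul, smul_eq_zero] at this
      rcases this with h | h
      · exact absurd (neg_eq_zero.mp h) hp
      · rw [map_sub, sub_eq_zero] at h
        rw [hag]
        exact h
  refine AlgEquiv.ofAlgHom (RingQuot.liftAlgHom K ⟨mkQ, hF⟩) (RingQuot.liftAlgHom K ⟨mkJ, hG⟩)
    ?_ ?_
  · apply RingQuot.ringQuot_ext'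
    apply FreeAlgebra.hom_ext
    funext x
    simp [hmkJ, hmkQ]
  · apply RingQuot.ringQuot_ext'
    apply FreeAlgebra.hom_ext
    funext x
    simp [hmkJ, hmkQ]

end
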